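/- Every g ∈ 𝒢 is an upper bound of the optimal value function: for every g ∈ 𝒢 and every x ∈ S, g(x) ≥ J*(λ,x). -/

import Mathlib

open scoped Classical BigOperators ENNReal

namespace RiskSensitive

/-- A (history-dependent, randomized) policy for a finite MDP: given the past
(chronological list of (state, action) pairs) and the current state, it assigns a
probability weight to each action, concentrated on the admissible actions. -/
structure Policy (S A : Type*) [Fintype S] [Fintype A] (Adm : S → Finset A) where
  toFun : List (S × A) → S → A → ℝ
  nonneg : ∀ h s a, 0 ≤ toFun h s a
  sum_one : ∀ h s, ∑ a, toFun h s a = 1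
  supp : ∀ h s a, a ∉ Adm s → toFun h s a = 0

variable {S A : Type*} [Fintype S] [Fintype A]
variable (Adm : S → Finset A) (p : S → A → S → ℝ) (C : S → A → ℝ) (lam : ℝ)

/-- Probability of a finite trajectory (list of (action, next-state) pairs), given the
history so far and the current state. -/
noncomputable def pathProbAux (π : Policy S A Adm) :
    List (S × A) → S → List (A × S) → ℝ
  | _, _, [] => 1
  | hist, x, (a, y) :: rest =>
      π.toFun hist x a * p x a y * pathProbAux π (hist ++ [(x, a)]) y rest

/-- `pathProb π x l` is `P_x^π[A_0 = a_0, X_1 = y_1, …]` for `l = [(a_0,y_1),…]`. -/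
noncomputable def pathProb (π : Policy S A Adm) (x : S) (l : List (A × S)) : ℝ :=
  pathProbAux Adm p π [] x l

/-- Probability of a cylinder event depending on the first `n` (action, next-state) pairs. -/
noncomputable def cylProb (π : Policy S A Adm) (x : S) (n : ℕ)
    (E : (Fin n → A × S) → Prop) : ℝ :=
  ∑ v : Fin n → A × S, if E v then pathProb Adm p π x (List.ofFn v) else 0

/-- The state `X_t` along the trajectory encoded by `l`, starting from `x`. -/
def stateAt (x : S) (l : List (A × S)) (t : ℕ) : S :=
  (l.take t).foldl (fun _ q => q.2) x

/-- The final state of the finite trajectory `l` started at `x`. -/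
def lastState (x : S) (l : List (A × S)) : S :=
  l.foldl (fun _ q => q.2) x

/-- `Σ_t w(X_t, A_t)` along the finite trajectory `l` started at `x`. -/
def costSum (w : S → A → ℝ) : S → List (A × S) → ℝ
  | _, [] => 0
  | x, (a, y) :: rest => w x a + costSum w y rest

/-- `J_n(λ,π,x) = (1/λ) log E_x^π[exp(λ Σ_{t<n} C(X_t,A_t))]`. -/
noncomputable def Jn (π : Policy S A Adm) (x : S) (n : ℕ) : ℝ :=
  (1 / lam) * Real.log (∑ v : Fin n → A × S,
    pathProb Adm p π x (List.ofFn v) * Real.exp (lam * costSum C x (List.ofFn v)))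

/-- The risk-sensitive average cost `J(λ,π,x) = limsup_n J_n(λ,π,x)/n`. -/
noncomputable def Javg (π : Policy S A Adm) (x : S) : ℝ :=
  Filter.limsup (fun n : ℕ => Jn Adm p C lam π x n / n) Filter.atTop

/-- Optimal risk-sensitive average cost `J*(λ,x)`. -/
noncomputable def Jopt (x : S) : ℝ :=
  ⨅ π : Policy S A Adm, Javg Adm p C lam π x

/-- `π` is `ε`-optimal at `x`. -/
def EpsOptimalAt (π : Policy S A Adm) (x : S) (ε : ℝ) : Prop :=
  Javg Adm p C lam π x ≤ Jopt Adm p C lam x + ε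

/-- `FirstExit Q v` : the trajectory `v` leaves `{Q}` for the first time exactly at its
last step, i.e. the exit time of `Q` equals `n`. -/
def FirstExit (Q : S → Prop) {n : ℕ} (v : Fin n → A × S) : Prop :=
  0 < n ∧ (∀ t : Fin n, (t : ℕ) + 1 < n → Q (v t).2) ∧
    ∀ t : Fin n, (t : ℕ) + 1 = n → ¬ Q (v t).2

/-- `E_x^π[ exp(Σ_{t<τ} w(X_t,A_t)) ]` where `τ = min{n ≥ 1 : ¬ Q (X_n)}` is the first
exit time from `Q` (the contribution of `[τ = ∞]` is null when `τ < ∞` a.s.). -/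
noncomputable def EexitExp (π : Policy S A Adm) (x : S) (Q : S → Prop)
    (w : S → A → ℝ) : ℝ≥0∞ :=
  ∑' n : ℕ, ∑ v : Fin n → A × S,
    if FirstExit Q v then
      ENNReal.ofReal (pathProb Adm p π x (List.ofFn v) *
        Real.exp (costSum w x (List.ofFn v)))
    else 0

/-- `E_x^π[ exp(Σ_{t<T} w(X_t,A_t)) ]` with `T` the first positive arrival time to `z`. -/
noncomputable def EhitExp (π : Policy S A Adm) (x z : S) (w : S → A → ℝ) : ℝ≥0∞ :=
  EexitExp Adm p π x (fun y => y ≠ z) w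

/-- `E_x^π[T]`, the expected first positive arrival time to `z`, computed as
`Σ_{n≥0} P_x^π[T > n]`. -/
noncomputable def ExpT (π : Policy S A Adm) (x z : S) : ℝ≥0∞ :=
  ∑' n : ℕ, ENNReal.ofReal
    (cylProb Adm p π x n (fun v => ∀ t : Fin n, (v t).2 ≠ z))

/-- `P_x^π[T > n]`, the probability that `z` is not visited during the first `n` steps. -/
noncomputable def survProb (π : Policy S A Adm) (x z : S) (n : ℕ) : ℝ :=
  cylProb Adm p π x n (fun v => ∀ t : Fin n, (v t).2 ≠ z)

/-- The stationary policy induced by a choice function `f ∈ 𝔽`. -/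
noncomputable def stationary (f : S → A) (hf : ∀ s, f s ∈ Adm s) : Policy S A Adm where
  toFun := fun _ s a => if a = f s then 1 else 0
  nonneg := by intro h s a; (try dsimp only); split <;> norm_num
  sum_one := by intro h s; simp
  supp := by
    intro h s a ha
    try dsimp only
    rw [if_neg]
    intro hEq
    exact ha (hEq ▸ hf s)

/-- The simultaneous Doeblin condition: `E_x^f[T] ≤ M` for every state `x` and every
stationary policy `f`, where `T` is the first positive arrival time to `z`. -/
def Doeblin (z : S) (M : ℝ) : Prop :=
  0 < M ∧ ∀ (x : S) (f : S → A) (hf : ∀ s, f s ∈ Adm s),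
    ExpT Adm p (stationary Adm f hf) x z ≤ ENNReal.ofReal M

/-- `B_g(x) = {a ∈ A(x) : g(x) = max{g(y) : p_{xy}(a) > 0}}`. -/
def Bg (g : S → ℝ) (x : S) : Set A :=
  {a | a ∈ Adm x ∧ g x = sSup (g '' {y | 0 < p x a y})}

/-- The family `𝒢` of functions characterizing `J*(λ,·)`. -/
def Gclass : Set (S → ℝ) :=
  {g | (∀ x, g x = sInf ((fun a => sSup (g '' {y | 0 < p x a y})) '' (Adm x : Set A))) ∧
    ∃ h : S → ℝ, ∀ x,
      sInf ((fun a => Real.exp (lam * C x a) * ∑ y, p x a y * Real.exp (lam * h y)) ''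
        Bg Adm p g x) ≤ Real.exp (lam * g x + lam * h x)}

/-- The class `𝒫*` of policies which always select actions in `B*(X_t)`. -/
def Pstar : Set (Policy S A Adm) :=
  {π | ∀ (x : S) (t : ℕ),
    cylProb Adm p π x (t + 1)
      (fun v => (v (Fin.last t)).1 ∈
        Bg Adm p (Jopt Adm p C lam) (stateAt x (List.ofFn v) t)) = 1}

/-- The deviation function
`h(x) = inf_{π ∈ 𝒫*} (1/λ) log E_x^π[exp(λα Σ_{t<T}(C(X_t,A_t) − J*(λ,X_t)))]`. -/
noncomputable def hdev (z : S) (α : ℝ) (x : S) : EReal :=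
  ⨅ π ∈ Pstar Adm p C lam, ((lam⁻¹ : ℝ) : EReal) *
    ENNReal.log (EhitExp Adm p π x z
      (fun s a => lam * α * (C s a - Jopt Adm p C lam s)))

/-- `ψ(ε) = (1/λ) inf_{δ∈𝒫*} log E_z^δ[exp(λ Σ_{t<T}(C(X_t,A_t) − γ₀ − 2ε))]`. -/
noncomputable def psi (z : S) (ε : ℝ) : EReal :=
  ((lam⁻¹ : ℝ) : EReal) * ⨅ π ∈ Pstar Adm p C lam,
    ENNReal.log (EhitExp Adm p π z z
      (fun s a => lam * (C s a - Jopt Adm p C lam z - 2 * ε)))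

/-- `ξ₀ = −(1−α) log β / (λα)`. -/
noncomputable def xi0 (α β : ℝ) : ℝ := -((1 - α) * Real.log β) / (lam * α)

/-- `ξ₁`: 1 if `J*(λ,·)` is constant, otherwise the minimum gap between distinct
values of `J*(λ,·)`. -/
noncomputable def xi1 : ℝ :=
  if ∀ u v : S, Jopt Adm p C lam u = Jopt Adm p C lam v then 1
  else sInf {d | ∃ u v : S, Jopt Adm p C lam u < Jopt Adm p C lam v ∧
    d = Jopt Adm p C lam v - Jopt Adm p C lam u}

/-- `ξ = min{ξ₀, ξ₁}`. -/
noncomputable def xi (α β : ℝ) : ℝ := min (xi0 lam α β) (xi1 Adm p C lam)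

/-- The shifted policy obtained by prefixing the fixed history `pre`. -/
def shiftPolicy (π : Policy S A Adm) (pre : List (S × A)) : Policy S A Adm where
  toFun := fun h s a => π.toFun (pre ++ h) s a
  nonneg := fun h s a => π.nonneg _ s a
  sum_one := fun h s => π.sum_one _ s
  supp := fun h s a ha => π.supp _ s a ha

/-- The history (list of (state, action) pairs) along the trajectory `l` started at `x`. -/
def histOf : S → List (A × S) → List (S × A)
  | _, [] => []
  | x, (a, y) :: rest => (x, a) :: histOf y rest


/-! ### Auxiliary lemmas for Statement 2 -/

lemma sum_fn_succ_aux {β : Type*} [Fintype β] (n : ℕ) (F : (Fin (n + 1) → β) → ℝ) :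
    ∑ v, F v = ∑ q : β, ∑ v : Fin n → β, F (Fin.cons q v) := by
  rw [Fintype.sum_equiv (Fin.consEquiv (fun _ : Fin (n + 1) => β)).symm _ (fun qv => F (Fin.cons qv.1 qv.2)) ?_,
    Fintype.sum_prod_type]
  intro v
  congr 1
  exact (Fin.cons_self_tail v).symm

lemma pathProbAux_nonneg
    (hp : ∀ (x : S), ∀ a ∈ Adm x, (∀ y, 0 ≤ p x a y) ∧ (∑ y, p x a y) = 1)
    (π : Policy S A Adm) :
    ∀ (l : List (A × S)) (hist : List (S × A)) (y : S),
      0 ≤ pathProbAux Adm p π hist y l := by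
  intro l
  induction l with
  | nil => intro hist y; simp [pathProbAux]
  | cons q rest ih =>
    intro hist y
    obtain ⟨a, z⟩ := q
    simp only [pathProbAux]
    by_cases ha : a ∈ Adm y
    · exact mul_nonneg (mul_nonneg (π.nonneg _ _ _) ((hp y a ha).1 z)) (ih _ _)
    · rw [π.supp _ _ _ ha]; simp

lemma sum_pathProbAux_eq_one
    (hp : ∀ (x : S), ∀ a ∈ Adm x, (∀ y, 0 ≤ p x a y) ∧ (∑ y, p x a y) = 1)
    (π : Policy S A Adm) :
    ∀ (n : ℕ) (hist : List (S × A)) (y : S),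
      ∑ v : Fin n → A × S, pathProbAux Adm p π hist y (List.ofFn v) = 1 := by
  intro n
  induction n with
  | zero => intro hist y; simp [pathProbAux]
  | succ n ih =>
    intro hist y
    rw [sum_fn_succ_aux]
    have h1 : ∀ q : A × S,
        (∑ v : Fin n → A × S, pathProbAux Adm p π hist y (List.ofFn (Fin.cons q v)))
          = π.toFun hist y q.1 * p y q.1 q.2 := by
      intro q
      obtain ⟨a, z⟩ := q
      have hrec : ∀ v : Fin n → A × S,
          pathProbAux Adm p π hist y (List.ofFn (Fin.cons (a, z) v))
            = π.toFun hist y a * p y a z *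
              pathProbAux Adm p π (hist ++ [(y, a)]) z (List.ofFn v) := by
        intro v
        rw [List.ofFn_succ]
        simp [pathProbAux, Fin.cons_succ]
      simp only [hrec]
      rw [← Finset.mul_sum, ih (hist ++ [(y, a)]) z, mul_one]
    simp only [h1]
    rw [Fintype.sum_prod_type]
    have h2 : ∀ a : A, (∑ z : S, π.toFun hist y a * p y a z) = π.toFun hist y a := by
      intro a
      by_cases ha : a ∈ Adm y
      · rw [← Finset.mul_sum, (hp y a ha).2, mul_one]
      · simp [π.supp _ _ _ ha]
    simp only [h2]
    exact π.sum_one hist y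

lemma costSum_ge (M : ℝ) (hM : ∀ s a, -M ≤ C s a) :
    ∀ (l : List (A × S)) (y : S), -(l.length * M) ≤ costSum C y l := by
  intro l
  induction l with
  | nil => intro y; simp [costSum]
  | cons q rest ih =>
    intro y
    obtain ⟨a, z⟩ := q
    simp only [costSum, List.length_cons]
    have h1 := ih z
    have h2 := hM y a
    push_cast
    linarith

lemma expSum_lower
    (hp : ∀ (x : S), ∀ a ∈ Adm x, (∀ y, 0 ≤ p x a y) ∧ (∑ y, p x a y) = 1)
    (hlam : 0 < lam) (π : Policy S A Adm) (x : S) (n : ℕ) (M : ℝ)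
    (hM : ∀ s a, -M ≤ C s a) :
    Real.exp (-(lam * (n * M))) ≤
      ∑ v : Fin n → A × S, pathProb Adm p π x (List.ofFn v) *
        Real.exp (lam * costSum C x (List.ofFn v)) := by
  have h1 : ∀ v : Fin n → A × S,
      pathProb Adm p π x (List.ofFn v) * Real.exp (-(lam * (n * M)))
        ≤ pathProb Adm p π x (List.ofFn v) *
          Real.exp (lam * costSum C x (List.ofFn v)) := by
    intro v
    apply mul_le_mul_of_nonneg_left _ (pathProbAux_nonneg Adm p hp π _ _ _)
    apply Real.exp_le_exp.mpr
    have hcs := costSum_ge C M hM (List.ofFn v) x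
    rw [List.length_ofFn] at hcs
    have := mul_le_mul_of_nonneg_left hcs hlam.le
    linarith
  calc Real.exp (-(lam * (n * M)))
      = ∑ v : Fin n → A × S, pathProb Adm p π x (List.ofFn v) *
          Real.exp (-(lam * (n * M))) := by
        simp only [pathProb]
        rw [← Finset.sum_mul, sum_pathProbAux_eq_one Adm p hp π n [] x, one_mul]
    _ ≤ _ := Finset.sum_le_sum fun v _ => h1 v

lemma Jn_lower
    (hp : ∀ (x : S), ∀ a ∈ Adm x, (∀ y, 0 ≤ p x a y) ∧ (∑ y, p x a y) = 1)
    (hlam : 0 < lam) (π : Policy S A Adm) (x : S) (n : ℕ) (M : ℝ)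
    (hM : ∀ s a, |C s a| ≤ M) :
    -(n * M) ≤ Jn Adm p C lam π x n := by
  have hM' : ∀ s a, -M ≤ C s a := fun s a => (abs_le.mp (hM s a)).1
  have hE := expSum_lower Adm p C lam hp hlam π x n M hM'
  rw [Jn]
  have hlog : -(lam * (n * M)) ≤ Real.log (∑ v : Fin n → A × S,
      pathProb Adm p π x (List.ofFn v) * Real.exp (lam * costSum C x (List.ofFn v))) := by
    calc -(lam * (n * M)) = Real.log (Real.exp (-(lam * (n * M)))) := (Real.log_exp _).symm
      _ ≤ _ := Real.log_le_log (Real.exp_pos _) hE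
  have h2 : (1 / lam) * (-(lam * ((n : ℝ) * M))) = -((n : ℝ) * M) := by
    field_simp
  have h3 := mul_le_mul_of_nonneg_left hlog (by positivity : (0:ℝ) ≤ 1 / lam)
  linarith

lemma JnDiv_lower
    (hp : ∀ (x : S), ∀ a ∈ Adm x, (∀ y, 0 ≤ p x a y) ∧ (∑ y, p x a y) = 1)
    (hlam : 0 < lam) (π : Policy S A Adm) (x : S) (M : ℝ)
    (hM : ∀ s a, |C s a| ≤ M) {n : ℕ} (hn : 1 ≤ n) :
    -M ≤ Jn Adm p C lam π x n / n := by
  have hJn := Jn_lower Adm p C lam hp hlam π x n M hM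
  have hnpos : (0:ℝ) < n := by exact_mod_cast hn
  rw [le_div_iff₀ hnpos]
  nlinarith

lemma Javg_lower
    (hp : ∀ (x : S), ∀ a ∈ Adm x, (∀ y, 0 ≤ p x a y) ∧ (∑ y, p x a y) = 1)
    (hlam : 0 < lam) (π : Policy S A Adm) (x : S) (M : ℝ)
    (hM : ∀ s a, |C s a| ≤ M) (hM0 : 0 ≤ M) :
    -M ≤ Javg Adm p C lam π x := by
  rw [Javg, Filter.limsup_eq]
  by_cases hne : {a : ℝ | ∀ᶠ n : ℕ in Filter.atTop, Jn Adm p C lam π x n / n ≤ a}.Nonempty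
  · refine le_csInf hne fun b hb => ?_
    simp only [Set.mem_setOf_eq, Filter.eventually_atTop] at hb
    obtain ⟨N, hN⟩ := hb
    exact le_trans (JnDiv_lower Adm p C lam hp hlam π x M hM (le_max_right N 1))
      (hN _ (le_max_left N 1))
  · rw [Set.not_nonempty_iff_eq_empty] at hne
    rw [hne, Real.sInf_empty]
    linarith

/-- every `g ∈ 𝒢` dominates the optimal value function. -/
theorem Gclass_upper_bound
    (hA : ∀ x, (Adm x).Nonempty)
    (hp : ∀ (x : S), ∀ a ∈ Adm x, (∀ y, 0 ≤ p x a y) ∧ (∑ y, p x a y) = 1)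
    (hlam : 0 < lam)
    (g : S → ℝ) (hg : g ∈ Gclass Adm p C lam) (x : S) :
    Jopt Adm p C lam x ≤ g x := by
  classical
  obtain ⟨hg1, h, hg2⟩ := hg
  obtain ⟨a0, ha0⟩ := hA x
  haveI hSne : Nonempty S := ⟨x⟩
  haveI hSA : Nonempty (S × A) := ⟨(x, a0)⟩
  set M : ℝ := Finset.univ.sup' Finset.univ_nonempty (fun q : S × A => |C q.1 q.2|) with hMdef
  have hMabs : ∀ s a, |C s a| ≤ M := fun s a => by
    rw [hMdef]; exact Finset.le_sup' (fun q : S × A => |C q.1 q.2|) (Finset.mem_univ (s, a))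
  have hM0 : 0 ≤ M := le_trans (abs_nonneg _) (hMabs x a0)
  -- selection of a good stationary policy
  have hsel : ∀ y : S, ∃ a : A, a ∈ Adm y ∧ (∀ z : S, 0 < p y a z → g z ≤ g y) ∧
      Real.exp (lam * C y a) * ∑ z, p y a z * Real.exp (lam * h z)
        ≤ Real.exp (lam * g y + lam * h y) := by
    intro y
    have hBne : (Bg Adm p g y).Nonempty := by
      have hTne : ((fun a => sSup (g '' {z | 0 < p y a z})) '' (Adm y : Set A)).Nonempty :=
        Set.Nonempty.image _ (Finset.coe_nonempty.mpr (hA y))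
      obtain ⟨a, haAdm, haEq⟩ := hTne.csInf_mem (Set.toFinite _)
      exact ⟨a, Finset.mem_coe.mp haAdm, by rw [hg1 y]; exact haEq.symm⟩
    have hmem := Set.Nonempty.csInf_mem
      (hBne.image (fun a => Real.exp (lam * C y a) * ∑ z, p y a z * Real.exp (lam * h z)))
      (Set.toFinite _)
    obtain ⟨a, haB, haEq⟩ := hmem
    refine ⟨a, haB.1, ?_, ?_⟩
    · intro z hz
      have hmem' : g z ∈ g '' {w | 0 < p y a w} := ⟨z, hz, rfl⟩
      have hle := le_csSup (Set.toFinite _).bddAbove hmem'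
      rw [haB.2]
      exact hle
    · exact le_of_eq_of_le haEq (hg2 y)
  choose f hf1 hf2 hf3 using hsel
  set π : Policy S A Adm := stationary Adm f hf1 with hπ
  have htf : ∀ (hist : List (S × A)) (y : S) (a : A),
      π.toFun hist y a = if a = f y then 1 else 0 := fun _ _ _ => rfl
  set m : ℝ := Finset.univ.inf' Finset.univ_nonempty h with hmdef
  have hmle : ∀ y, m ≤ h y := fun y => Finset.inf'_le _ (Finset.mem_univ y)
  -- key induction
  have key : ∀ (n : ℕ) (hist : List (S × A)) (y : S),
      (∑ v : Fin n → A × S, pathProbAux Adm p π hist y (List.ofFn v) *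
        Real.exp (lam * costSum C y (List.ofFn v)))
        ≤ Real.exp (lam * (n * g y + h y - m)) := by
    intro n
    induction n with
    | zero =>
      intro hist y
      have hval : (∑ v : Fin 0 → A × S, pathProbAux Adm p π hist y (List.ofFn v) *
          Real.exp (lam * costSum C y (List.ofFn v))) = 1 := by
        simp [pathProbAux, costSum]
      rw [hval]
      rw [show (1:ℝ) = Real.exp 0 from (Real.exp_zero).symm]
      apply Real.exp_le_exp.mpr
      have h1 := hmle y
      have h2 : lam * ((0:ℕ) * g y + h y - m) = lam * (h y - m) := by push_cast; ring
      rw [h2]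
      have : (0:ℝ) ≤ h y - m := by linarith
      positivity
    | succ n ih =>
      intro hist y
      rw [sum_fn_succ_aux]
      have hterm : ∀ q : A × S,
          (∑ v : Fin n → A × S, pathProbAux Adm p π hist y (List.ofFn (Fin.cons q v)) *
            Real.exp (lam * costSum C y (List.ofFn (Fin.cons q v))))
          = (if q.1 = f y then 1 else 0) * p y q.1 q.2 *
            (Real.exp (lam * C y q.1) *
              ∑ v : Fin n → A × S, pathProbAux Adm p π (hist ++ [(y, q.1)]) q.2 (List.ofFn v) *
                Real.exp (lam * costSum C q.2 (List.ofFn v))) := by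
        intro q
        obtain ⟨a, z⟩ := q
        rw [Finset.mul_sum, Finset.mul_sum]
        refine Finset.sum_congr rfl fun v _ => ?_
        rw [List.ofFn_succ]
        simp only [Fin.cons_zero, Fin.cons_succ, pathProbAux, costSum, htf]
        rw [mul_add, Real.exp_add]
        ring
      simp only [hterm]
      -- bound each term
      have hbound : ∀ q : A × S,
          (if q.1 = f y then (1:ℝ) else 0) * p y q.1 q.2 *
            (Real.exp (lam * C y q.1) *
              ∑ v : Fin n → A × S, pathProbAux Adm p π (hist ++ [(y, q.1)]) q.2 (List.ofFn v) *
                Real.exp (lam * costSum C q.2 (List.ofFn v)))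
          ≤ (if q.1 = f y then (1:ℝ) else 0) * p y q.1 q.2 *
            (Real.exp (lam * C y q.1) *
              (Real.exp (lam * (n * g y - m)) * Real.exp (lam * h q.2))) := by
        intro q
        obtain ⟨a, z⟩ := q
        by_cases ha : a = f y
        · simp only [ha, eq_self_iff_true]
          rw [if_pos trivial]
          simp only [one_mul]
          by_cases hpz : 0 < p y (f y) z
          · apply mul_le_mul_of_nonneg_left _ hpz.le
            apply mul_le_mul_of_nonneg_left _ (Real.exp_pos _).le
            calc (∑ v : Fin n → A × S, pathProbAux Adm p π (hist ++ [(y, f y)]) z (List.ofFn v) *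
                  Real.exp (lam * costSum C z (List.ofFn v)))
                ≤ Real.exp (lam * (n * g z + h z - m)) := ih _ _
              _ ≤ Real.exp (lam * (n * g y - m)) * Real.exp (lam * h z) := by
                  rw [← Real.exp_add]
                  apply Real.exp_le_exp.mpr
                  have hgz := hf2 y z hpz
                  have : lam * ((n:ℝ) * g z) ≤ lam * ((n:ℝ) * g y) := by
                    apply mul_le_mul_of_nonneg_left _ hlam.le
                    apply mul_le_mul_of_nonneg_left hgz (Nat.cast_nonneg n)
                  nlinarith [this]
          · have hz0 : p y (f y) z = 0 :=
              le_antisymm (not_lt.mp hpz) ((hp y (f y) (hf1 y)).1 z)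
            rw [hz0]
            simp
        · simp [ha]
      calc (∑ q : A × S, (if q.1 = f y then (1:ℝ) else 0) * p y q.1 q.2 *
              (Real.exp (lam * C y q.1) *
                ∑ v : Fin n → A × S, pathProbAux Adm p π (hist ++ [(y, q.1)]) q.2 (List.ofFn v) *
                  Real.exp (lam * costSum C q.2 (List.ofFn v))))
          ≤ ∑ q : A × S, (if q.1 = f y then (1:ℝ) else 0) * p y q.1 q.2 *
              (Real.exp (lam * C y q.1) *
                (Real.exp (lam * (n * g y - m)) * Real.exp (lam * h q.2))) :=
            Finset.sum_le_sum fun q _ => hbound q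
        _ = Real.exp (lam * (n * g y - m)) *
              (Real.exp (lam * C y (f y)) * ∑ z, p y (f y) z * Real.exp (lam * h z)) := by
            rw [Fintype.sum_prod_type]
            rw [Finset.sum_eq_single (f y)]
            · simp only [Finset.mul_sum]
              refine Finset.sum_congr rfl fun z _ => ?_
              rw [if_pos trivial]
              ring
            · intro b _ hb
              simp [hb]
            · intro hb
              exact absurd (Finset.mem_univ (f y)) hb
        _ ≤ Real.exp (lam * (n * g y - m)) * Real.exp (lam * g y + lam * h y) :=
            mul_le_mul_of_nonneg_left (hf3 y) (Real.exp_pos _).le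
        _ = Real.exp (lam * ((n + 1 : ℕ) * g y + h y - m)) := by
            rw [← Real.exp_add]
            congr 1
            push_cast
            ring
  -- upper bound on Jn for the chosen policy
  have hJn_ub : ∀ n : ℕ, Jn Adm p C lam π x n ≤ n * g x + (h x - m) := by
    intro n
    have hE_ub := key n [] x
    have hE_lb := expSum_lower Adm p C lam hp hlam π x n M
      (fun s a => (abs_le.mp (hMabs s a)).1)
    rw [Jn]
    have hpos : 0 < ∑ v : Fin n → A × S, pathProb Adm p π x (List.ofFn v) *
        Real.exp (lam * costSum C x (List.ofFn v)) :=
      lt_of_lt_of_le (Real.exp_pos _) hE_lb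
    have hlog : Real.log (∑ v : Fin n → A × S, pathProb Adm p π x (List.ofFn v) *
        Real.exp (lam * costSum C x (List.ofFn v))) ≤ lam * (n * g x + h x - m) := by
      calc Real.log (∑ v : Fin n → A × S, pathProb Adm p π x (List.ofFn v) *
            Real.exp (lam * costSum C x (List.ofFn v)))
          ≤ Real.log (Real.exp (lam * (n * g x + h x - m))) :=
            Real.log_le_log hpos hE_ub
        _ = lam * (n * g x + h x - m) := Real.log_exp _
    have h2 : (1 / lam) * (lam * ((n:ℝ) * g x + h x - m)) = (n:ℝ) * g x + (h x - m) := by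
      field_simp
      ring
    have h3 := mul_le_mul_of_nonneg_left hlog (by positivity : (0:ℝ) ≤ 1 / lam)
    linarith
  -- limsup bound
  have hKey2 : Javg Adm p C lam π x ≤ g x := by
    apply le_of_forall_pos_le_add
    intro ε hε
    rw [Javg]
    apply Filter.limsup_le_of_le
    · apply Filter.isCoboundedUnder_le_of_eventually_le Filter.atTop (x := -M)
      filter_upwards [Filter.eventually_ge_atTop 1] with n hn
      exact JnDiv_lower Adm p C lam hp hlam π x M hMabs hn
    · obtain ⟨N, hN⟩ := exists_nat_gt ((h x - m) / ε)
      filter_upwards [Filter.eventually_ge_atTop (max N 1)] with n hn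
      have hn1 : 1 ≤ n := le_trans (le_max_right _ _) hn
      have hnN : N ≤ n := le_trans (le_max_left _ _) hn
      have hnpos : (0:ℝ) < n := by exact_mod_cast hn1
      rw [div_le_iff₀ hnpos]
      have hJ := hJn_ub n
      have hNn : ((h x - m) / ε) < (n:ℝ) := lt_of_lt_of_le hN (by exact_mod_cast hnN)
      have hhm : h x - m < (n:ℝ) * ε := (div_lt_iff₀ hε).mp hNn
      nlinarith
  -- conclude
  have hbdd : BddBelow (Set.range fun π' : Policy S A Adm => Javg Adm p C lam π' x) := by
    refine ⟨-M, ?_⟩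
    rintro r ⟨π', rfl⟩
    exact Javg_lower Adm p C lam hp hlam π' x M hMabs hM0
  calc Jopt Adm p C lam x ≤ Javg Adm p C lam π x := ciInf_le hbdd π
    _ ≤ g x := hKey2

end RiskSensitive
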